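/- Let f(t) = a₀t^{p^e} + a₁t^{p^{e−1}} + ⋯ + a_e t + d ∈ D[t;δ] be a monic p-polynomial of degree p^e ≥ 2. Then: (i) for every a ∈ C, S_f ≅ S_h as F-algebras, where h(t) = f(t) − V_f(a); (ii) for every a ∈ C with V_f(a) = 0, the map G_{id,−a} is an F-algebra automorphism of S_f. -/

import Mathlib

open Finsupp

section Defs

variable {D R : Type*}

/-- `δ` is a derivation on the (possibly noncommutative) ring `D`. -/
def IsDeriv [Ring D] (δ : D → D) : Prop :=
  (∀ a b, δ (a + b) = δ a + δ b) ∧ ∀ a b, δ (a * b) = a * δ b + δ a * b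

/-- `(R, i, t, coeff)` realizes the differential polynomial ring `D[t;δ]`:
`t * a = a * t + δ a` for `a ∈ D`, and every element of `R` is uniquely of
the form `∑ aₙ tⁿ`, the `aₙ` being recorded by the additive equivalence `coeff`. -/
def IsDiffPolyRing [Ring D] [Ring R] (δ : D → D) (i : D →+* R) (t : R)
    (coeff : R ≃+ (ℕ →₀ D)) : Prop :=
  (∀ a : D, t * i a = i a * t + i (δ a)) ∧
    ∀ (n : ℕ) (a : D), coeff.symm (Finsupp.single n a) = i a * t ^ n

/-- `r` has degree `< m`. -/
def DegLt [Ring D] [Ring R] (coeff : R ≃+ (ℕ →₀ D)) (m : ℕ) (r : R) : Prop :=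
  ∀ n, m ≤ n → coeff r n = 0

/-- `f` is monic of degree `m`. -/
def MonicDeg [Ring D] [Ring R] (coeff : R ≃+ (ℕ →₀ D)) (m : ℕ) (f : R) : Prop :=
  coeff f m = 1 ∧ ∀ n, m < n → coeff f n = 0

/-- The carrier of the Petit algebra `S_f`: all polynomials of degree `< m`. -/
def SfSet [Ring D] [Ring R] (coeff : R ≃+ (ℕ →₀ D)) (m : ℕ) : Set R :=
  {r | DegLt coeff m r}

/-- `mul` is the Petit multiplication: `mul x y = x·y mod_r f`, i.e. `mul x y`
has degree `< m` and differs from `x·y` by a left multiple of `f`. -/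
def IsPetitMul [Ring D] [Ring R] (coeff : R ≃+ (ℕ →₀ D)) (f : R) (m : ℕ)
    (mul : R → R → R) : Prop :=
  ∀ x y : R, DegLt coeff m (mul x y) ∧ ∃ q : R, x * y = q * f + mul x y

/-- `f` is right semi-invariant: `f·a ∈ D·f` for all `a ∈ D`. -/
def RightSemiInvariant [Ring D] [Ring R] (i : D →+* R) (f : R) : Prop :=
  ∀ a : D, ∃ b : D, f * i a = i b * f

/-- `f` is two-sided (invariant): the left ideal `Rf` is a two-sided ideal. -/
def TwoSidedElem [Ring R] (f : R) : Prop :=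
  ∀ r : R, ∃ q : R, f * r = q * f

/-- `f` (of degree `m`) is irreducible: it has no factorization into factors
of degree `< m`. -/
def IrredDeg [Ring D] [Ring R] (coeff : R ≃+ (ℕ →₀ D)) (m : ℕ) (f : R) : Prop :=
  ¬∃ g h : R, f = g * h ∧ DegLt coeff m g ∧ DegLt coeff m h

/-- `f` (of degree `m`) is irreducible as a polynomial with coefficients in
the subfield `Fset` of `D`. -/
def IrredOver [Ring D] [Ring R] (coeff : R ≃+ (ℕ →₀ D)) (Fset : Set D) (m : ℕ)
    (f : R) : Prop :=
  ¬∃ g h : R, f = g * h ∧ DegLt coeff m g ∧ DegLt coeff m h ∧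
    (∀ n, coeff g n ∈ Fset) ∧ ∀ n, coeff h n ∈ Fset

/-- Left nucleus of the algebra `(S, mul)`. -/
def LeftNuc [Ring R] (S : Set R) (mul : R → R → R) : Set R :=
  {x ∈ S | ∀ y ∈ S, ∀ z ∈ S, mul (mul x y) z = mul x (mul y z)}

/-- Middle nucleus of the algebra `(S, mul)`. -/
def MidNuc [Ring R] (S : Set R) (mul : R → R → R) : Set R :=
  {x ∈ S | ∀ y ∈ S, ∀ z ∈ S, mul (mul y x) z = mul y (mul x z)}

/-- Right nucleus of the algebra `(S, mul)`. -/
def RightNuc [Ring R] (S : Set R) (mul : R → R → R) : Set R :=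
  {x ∈ S | ∀ y ∈ S, ∀ z ∈ S, mul (mul y z) x = mul y (mul z x)}

/-- `(S, mul)` is a division algebra: all nonzero left and right
multiplications are bijective. -/
def IsDivAlg [Ring R] (S : Set R) (mul : R → R → R) : Prop :=
  ∀ x ∈ S, x ≠ 0 → Set.BijOn (mul x) S S ∧ Set.BijOn (fun y => mul y x) S S

/-- `(S, mul)` is associative. -/
def IsAssocOn [Ring R] (S : Set R) (mul : R → R → R) : Prop :=
  ∀ x ∈ S, ∀ y ∈ S, ∀ z ∈ S, mul (mul x y) z = mul x (mul y z)

/-- The constants of `δ`. -/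
def ConstSet [Ring D] (δ : D → D) : Set D := {a | δ a = 0}

/-- The center of `D`. -/
def CenterSet (D : Type*) [Ring D] : Set D := {a | ∀ b, a * b = b * a}

/-- `F₀ = Const(δ) ∩ C(D)`. -/
def F0Set [Ring D] (δ : D → D) : Set D := ConstSet δ ∩ CenterSet D

/-- The elements of the Petit algebra all of whose coefficients lie in `Fset`,
e.g. `Fset ⊕ Fset·t ⊕ ⋯ ⊕ Fset·t^{m-1}`. -/
def SubCoeffSet [Ring D] [Ring R] (coeff : R ≃+ (ℕ →₀ D)) (m : ℕ)
    (Fset : Set D) : Set R :=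
  {r | DegLt coeff m r ∧ ∀ n, coeff r n ∈ Fset}

/-- `S ⊆ R` has dimension `k` over the subfield `Fset ⊆ D` (acting through `i`):
there is an `Fset`-basis of size `k`. -/
def HasDim [Ring D] [Ring R] (Fset : Set D) (i : D →+* R) (S : Set R) (k : ℕ) : Prop :=
  ∃ b : Fin k → R, (∀ j, b j ∈ S) ∧
    ∀ x ∈ S, ∃! c : Fin k → D, (∀ j, c j ∈ Fset) ∧ x = ∑ j, i (c j) * b j

/-- `S ⊆ D` has dimension `k` over the subfield `Fset ⊆ D`. -/
def HasDimIn [Ring D] (Fset : Set D) (S : Set D) (k : ℕ) : Prop :=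
  ∃ b : Fin k → D, (∀ j, b j ∈ S) ∧
    ∀ x ∈ S, ∃! c : Fin k → D, (∀ j, c j ∈ Fset) ∧ x = ∑ j, c j * b j

/-- Substitution of `x` for `t` in `r = ∑ aₙ tⁿ`. -/
noncomputable def substT [Ring D] [Ring R] (coeff : R ≃+ (ℕ →₀ D)) (i : D →+* R) (r x : R) : R :=
  (coeff r).sum fun n c => i c * x ^ n

/-- `V_f(b)`: the constant `f(t) − f(t−b)`. -/
noncomputable def Vf [Ring D] [Ring R] (coeff : R ≃+ (ℕ →₀ D)) (i : D →+* R) (t f : R) (b : D) : D :=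
  coeff (f - substT coeff i f (t - i b)) 0

/-- `V_p(b)`: the constant with `(t−b)^p = t^p − V_p(b)`. -/
noncomputable def Vp [Ring D] [Ring R] (coeff : R ≃+ (ℕ →₀ D)) (i : D →+* R) (t : R) (p : ℕ)
    (b : D) : D :=
  coeff (t ^ p - (t - i b) ^ p) 0

/-- For commutative coefficients, `V_p(b) = b^p + δ^{p−1}(b)`. -/
def VpFun [Ring D] (δ : D → D) (p : ℕ) : D → D := fun b => b ^ p + δ^[p - 1] b

/-- `V(a) = V_{p^e}(a) + c₁ V_{p^{e−1}}(a) + ⋯ + c_e a`, computed with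
`V_p(b) = b^p + δ^{p−1}(b)` (commutative case). -/
def Vg [Ring D] (δ : D → D) (p e : ℕ) (c : Fin e → D) : D → D :=
  fun a => (VpFun δ p)^[e] a + ∑ j : Fin e, c j * (VpFun δ p)^[e - 1 - (j : ℕ)] a

/-- `V(a) = V_{p^e}(a) + c₁ V_{p^{e−1}}(a) + ⋯ + c_e a`, with `V_p` defined by
the identity `(t−b)^p = t^p − V_p(b)` in `D[t;δ]`. -/
noncomputable def VgR [Ring D] [Ring R] (coeff : R ≃+ (ℕ →₀ D)) (i : D →+* R) (t : R) (p e : ℕ)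
    (c : Fin e → D) : D → D :=
  fun a => (Vp coeff i t p)^[e] a + ∑ j : Fin e, c j * (Vp coeff i t p)^[e - 1 - (j : ℕ)] a

/-- The map `G_{id,−a}` sending `∑ bₙ tⁿ` to `∑ bₙ (t−a)ⁿ`. -/
noncomputable def Gmap [Ring D] [Ring R] (coeff : R ≃+ (ℕ →₀ D)) (i : D →+* R) (t : R) (a : D) :
    R → R :=
  fun r => substT coeff i r (t - i a)

/-- `H` is an isomorphism of `Fset`-algebras from `(S, mul)` onto `(S', mul')`. -/
def IsAlgIso [Ring D] [Ring R] (Fset : Set D) (i : D →+* R) (S S' : Set R)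
    (mul mul' : R → R → R) (H : R → R) : Prop :=
  Set.BijOn H S S' ∧ (∀ x ∈ S, ∀ y ∈ S, H (x + y) = H x + H y) ∧
    (∀ x ∈ S, ∀ y ∈ S, H (mul x y) = mul' (H x) (H y)) ∧ H 1 = 1 ∧
    ∀ a ∈ Fset, ∀ x ∈ S, H (i a * x) = i a * H x

/-- `H` is an `Fset`-algebra automorphism of the Petit algebra `(S, mul)`. -/
def IsAut [Ring D] [Ring R] (Fset : Set D) (i : D →+* R) (S : Set R)
    (mul : R → R → R) (H : R → R) : Prop :=
  IsAlgIso Fset i S S mul mul H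

/-- The operator `δ^{p^e} + c₁ δ^{p^{e−1}} + ⋯ + c_e δ` vanishes on `Cset`,
i.e. the `p`-polynomial `t^{p^e} + c₁ t^{p^{e−1}} + ⋯ + c_e t` annihilates `δ|_{Cset}`. -/
def PPolyAnnOn [Ring D] (δ : D → D) (Cset : Set D) (p e : ℕ) (c : Fin e → D) : Prop :=
  ∀ a ∈ Cset, δ^[p ^ e] a + ∑ j : Fin e, c j * δ^[p ^ (e - 1 - (j : ℕ))] a = 0

/-- `t^{p^e} + c₁ t^{p^{e−1}} + ⋯ + c_e t` (coefficients in `Fset`) is the minimum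
`p`-polynomial of `δ` restricted to `Cset`. -/
def IsMinPPoly [Ring D] (δ : D → D) (Cset Fset : Set D) (p e : ℕ)
    (c : Fin e → D) : Prop :=
  (∀ j, c j ∈ Fset) ∧ PPolyAnnOn δ Cset p e c ∧
    ∀ e' : ℕ, e' < e → ∀ c' : Fin e' → D, (∀ j, c' j ∈ Fset) →
      ¬PPolyAnnOn δ Cset p e' c'

/-- The natural map from `D[X]` to `R`, `∑ aₙ Xⁿ ↦ ∑ aₙ tⁿ`. -/
noncomputable def polyToR [Ring D] [Ring R] (i : D →+* R) (t : R) (q : Polynomial D) : R :=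
  q.sum fun n a => i a * t ^ n

/-- The element `f ∈ R` rewritten as an ordinary polynomial in `D[X]`. -/
noncomputable def coeffPoly [Ring D] [Ring R] (coeff : R ≃+ (ℕ →₀ D)) (f : R) : Polynomial D :=
  (coeff f).sum fun n a => Polynomial.C a * Polynomial.X ^ n

/-- The set `T = Fset ⊕ Fset·t ⊕ ⋯ ⊕ Fset·t^{m−1} ⊆ S_f` is isomorphic, as a
ring, to the quotient `Fset[X]/(f)`: the natural map `θ : ∑ aₙ Xⁿ ↦ ∑ aₙ tⁿ`,
from polynomials over `Fset` of degree `< m` with multiplication given by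
reduction mod `f`, is a bijection onto `T` respecting all the operations. -/
def IsPolyQuotIso [Ring D] [Ring R] (Fset : Set D) (i : D →+* R)
    (coeff : R ≃+ (ℕ →₀ D)) (t f : R) (m : ℕ) (mul : R → R → R) (T : Set R) : Prop :=
  Set.BijOn (polyToR i t)
    {q : Polynomial D | (∀ n, q.coeff n ∈ Fset) ∧ q.degree < (m : WithBot ℕ)} T ∧
  (∀ q q' : Polynomial D, polyToR i t (q + q') = polyToR i t q + polyToR i t q') ∧
  polyToR i t 1 = 1 ∧
  ∀ q ∈ {q : Polynomial D | (∀ n, q.coeff n ∈ Fset) ∧ q.degree < (m : WithBot ℕ)},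
    ∀ q' ∈ {q : Polynomial D | (∀ n, q.coeff n ∈ Fset) ∧ q.degree < (m : WithBot ℕ)},
      ∃ s r : Polynomial D, q * q' = s * coeffPoly coeff f + r ∧
        r.degree < (m : WithBot ℕ) ∧
        polyToR i t r = mul (polyToR i t q) (polyToR i t q')

end Defs
section Aux

variable {D R : Type*} [Ring D] [Ring R] {δ : D → D} {i : D →+* R} {t : R}
  {coeff : R ≃+ (ℕ →₀ D)}

lemma IsDeriv.zero' (hδ : IsDeriv δ) : δ 0 = 0 := by
  have h := hδ.1 0 0
  rw [add_zero] at h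
  exact (left_eq_add.mp h)

lemma coeff_mono (hR : IsDiffPolyRing δ i t coeff) (n : ℕ) (a : D) :
    coeff (i a * t ^ n) = Finsupp.single n a := by
  rw [← hR.2 n a, AddEquiv.apply_symm_apply]

lemma coeff_tpow (hR : IsDiffPolyRing δ i t coeff) (n : ℕ) :
    coeff (t ^ n) = Finsupp.single n (1 : D) := by
  rw [← coeff_mono hR n 1, map_one, one_mul]

lemma decomp (hR : IsDiffPolyRing δ i t coeff) (x : R) :
    x = (coeff x).sum fun n a => i a * t ^ n := by
  calc x = coeff.symm ((coeff x).sum Finsupp.single) := by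
        rw [Finsupp.sum_single, AddEquiv.symm_apply_apply]
    _ = (coeff x).sum fun n a => i a * t ^ n := by
        rw [map_finsuppSum]
        exact Finsupp.sum_congr fun n _ => hR.2 n _

lemma rind (hR : IsDiffPolyRing δ i t coeff) {P : R → Prop} (h0 : P 0)
    (hadd : ∀ x y, P x → P y → P (x + y)) (hmono : ∀ (n : ℕ) (a : D), P (i a * t ^ n))
    (x : R) : P x := by
  rw [decomp hR x]
  exact Finset.sum_induction _ P hadd h0 (fun n _ => hmono n _)

lemma coeff_i_mul (hR : IsDiffPolyRing δ i t coeff) (a : D) (z : R) (k : ℕ) :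
    coeff (i a * z) k = a * coeff z k := by
  induction z using rind hR with
  | h0 => simp
  | hadd x y hx hy => rw [mul_add, map_add, map_add, Finsupp.add_apply, Finsupp.add_apply,
      hx, hy, mul_add]
  | hmono n c =>
    rw [← mul_assoc, ← map_mul, coeff_mono hR, coeff_mono hR, Finsupp.single_apply,
      Finsupp.single_apply]
    split <;> simp

lemma t_mul_mono (hR : IsDiffPolyRing δ i t coeff) (n : ℕ) (c : D) :
    t * (i c * t ^ n) = i c * t ^ (n + 1) + i (δ c) * t ^ n := by
  rw [← mul_assoc, hR.1, add_mul, mul_assoc, ← pow_succ']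

lemma coeff_t_mul_zero (hR : IsDiffPolyRing δ i t coeff) (hδ : IsDeriv δ) (z : R) :
    coeff (t * z) 0 = δ (coeff z 0) := by
  induction z using rind hR with
  | h0 => simp [hδ.zero']
  | hadd x y hx hy => rw [mul_add, map_add coeff (t * x) (t * y), Finsupp.add_apply, hx, hy,
      map_add coeff x y, Finsupp.add_apply, hδ.1]
  | hmono n c =>
    rw [t_mul_mono hR, map_add coeff _ _, coeff_mono hR, coeff_mono hR, coeff_mono hR,
      Finsupp.add_apply, Finsupp.single_apply, Finsupp.single_apply, Finsupp.single_apply]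
    rcases n with _ | n <;> simp [hδ.zero']

lemma coeff_t_mul_succ (hR : IsDiffPolyRing δ i t coeff) (hδ : IsDeriv δ) (z : R) (k : ℕ) :
    coeff (t * z) (k + 1) = coeff z k + δ (coeff z (k + 1)) := by
  induction z using rind hR with
  | h0 => simp [hδ.zero']
  | hadd x y hx hy =>
    rw [mul_add, map_add coeff (t * x) (t * y), Finsupp.add_apply, hx, hy,
      map_add coeff x y, Finsupp.add_apply, Finsupp.add_apply, hδ.1]
    abel
  | hmono n c =>
    rw [t_mul_mono hR, map_add coeff _ _, coeff_mono hR, coeff_mono hR, coeff_mono hR,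
      Finsupp.add_apply, Finsupp.single_apply, Finsupp.single_apply, Finsupp.single_apply]
    by_cases h1 : n = k
    · subst h1
      simp [hδ.zero']
    · by_cases h2 : n = k + 1
      · subst h2
        simp [hδ.zero']
      · have : ¬ (n + 1 = k + 1) := fun hh => h1 (Nat.succ_injective hh)
        simp [h1, h2, this, hδ.zero']

end Aux
section Aux2

variable {D R : Type*} [Ring D] [Ring R] {δ : D → D} {i : D →+* R} {t : R}
  {coeff : R ≃+ (ℕ →₀ D)}

lemma coeff_tpow_mul (hR : IsDiffPolyRing δ i t coeff) (hδ : IsDeriv δ) (n : ℕ) :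
    ∀ (z : R) (N : ℕ), (∀ k, N < k → coeff z k = 0) →
      coeff (t ^ n * z) (N + n) = coeff z N ∧ ∀ k, N + n < k → coeff (t ^ n * z) k = 0 := by
  induction n with
  | zero => intro z N hz; simpa using hz
  | succ n ih =>
    intro z N hz
    obtain ⟨ih1, ih2⟩ := ih z N hz
    have hrw : t ^ (n + 1) * z = t * (t ^ n * z) := by rw [pow_succ', mul_assoc]
    constructor
    · rw [hrw, show N + (n + 1) = (N + n) + 1 from rfl, coeff_t_mul_succ hR hδ,
        ih1, ih2 (N + n + 1) (Nat.lt_succ_self _), hδ.zero', add_zero]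
    · intro k hk
      rcases k with _ | k'
      · omega
      · rw [hrw, coeff_t_mul_succ hR hδ, ih2 k' (by omega), ih2 (k' + 1) (by omega),
          hδ.zero', add_zero]

lemma coeff_mul_monic (hR : IsDiffPolyRing δ i t coeff) (hδ : IsDeriv δ) {h : R} {m : ℕ}
    (hm1 : coeff h m = 1) (hm2 : ∀ k, m < k → coeff h k = 0) (q : R) (N : ℕ)
    (hq : ∀ k, N < k → coeff q k = 0) : coeff (q * h) (N + m) = coeff q N := by
  have hqh : q * h = (coeff q).sum fun n a => i a * (t ^ n * h) := by
    conv_lhs => rw [decomp hR q]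
    rw [Finsupp.sum_mul]
    exact Finsupp.sum_congr fun n _ => mul_assoc _ _ _
  rw [hqh, map_finsuppSum, Finsupp.sum_apply]
  unfold Finsupp.sum
  have hfN : coeff (i ((coeff q) N) * (t ^ N * h)) (N + m) = coeff q N := by
    rw [coeff_i_mul hR, Nat.add_comm, (coeff_tpow_mul hR hδ N h m hm2).1, hm1, mul_one]
  rw [Finset.sum_eq_single N]
  · exact hfN
  · intro b hb hbN
    dsimp only
    have hbN' : b < N := by
      rcases Nat.lt_or_ge b N with h' | h'
      · exact h'
      · exfalso
        rcases Nat.eq_or_lt_of_le h' with h'' | h''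
        · exact hbN h''.symm
        · exact Finsupp.mem_support_iff.mp hb (hq b h'')
    rw [coeff_i_mul hR, (coeff_tpow_mul hR hδ b h m hm2).2 (N + m) (by omega), mul_zero]
  · intro hN
    dsimp only
    rw [hfN]
    exact Finsupp.notMem_support_iff.mp hN

lemma remainder_unique (hR : IsDiffPolyRing δ i t coeff) (hδ : IsDeriv δ) {h : R} {m : ℕ}
    (hm1 : coeff h m = 1) (hm2 : ∀ k, m < k → coeff h k = 0) (q q' r r' : R)
    (hr : DegLt coeff m r) (hr' : DegLt coeff m r')
    (heq : q * h + r = q' * h + r') : r = r' := by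
  have key : ∀ q0 r0 : R, DegLt coeff m r0 → q0 * h = r0 → r0 = 0 := by
    intro q0 r0 hr0 he
    rcases eq_or_ne q0 0 with h0 | h0
    · rw [h0, zero_mul] at he; exact he.symm
    · exfalso
      have hc0 : coeff q0 ≠ 0 := fun hcc =>
        h0 (by rw [← AddEquiv.symm_apply_apply coeff q0, hcc, map_zero])
      have hne : (coeff q0).support.Nonempty := Finsupp.support_nonempty_iff.mpr hc0
      set N := (coeff q0).support.max' hne with hN
      have hub : ∀ k, N < k → coeff q0 k = 0 := by
        intro k hk
        by_contra hne2
        exact absurd (Finset.le_max' _ k (Finsupp.mem_support_iff.mpr hne2)) (by omega)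
      have htop := coeff_mul_monic hR hδ hm1 hm2 q0 N hub
      rw [he, hr0 (N + m) (Nat.le_add_left m N)] at htop
      exact Finsupp.mem_support_iff.mp ((coeff q0).support.max'_mem hne) htop.symm
  have hsub : (q - q') * h = r' - r := by
    rw [sub_mul, sub_eq_sub_iff_add_eq_add, heq]
    exact add_comm _ _
  have hr0 : DegLt coeff m (r' - r) := by
    intro k hk
    rw [map_sub, Finsupp.sub_apply, hr' k hk, hr k hk, sub_zero]
  exact (sub_eq_zero.mp (key _ _ hr0 hsub)).symm

end Aux2
section Aux3

variable {D R : Type*} [Ring D] [Ring R] {δ : D → D} {i : D →+* R} {t : R}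
  {coeff : R ≃+ (ℕ →₀ D)}

lemma ustep (hR : IsDiffPolyRing δ i t coeff) (b : D) (k : ℕ) (a : D) :
    (t - i b) * (i a * t ^ k) = i a * t ^ (k + 1) + i (δ a - b * a) * t ^ k := by
  calc (t - i b) * (i a * t ^ k) = (t * i a) * t ^ k - (i b * i a) * t ^ k := by
        rw [sub_mul, mul_assoc, mul_assoc]
    _ = (i a * t + i (δ a)) * t ^ k - i (b * a) * t ^ k := by rw [hR.1, map_mul]
    _ = i a * t ^ (k + 1) + (i (δ a) * t ^ k - i (b * a) * t ^ k) := by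
        rw [add_mul, mul_assoc, ← pow_succ']
        abel
    _ = i a * t ^ (k + 1) + i (δ a - b * a) * t ^ k := by rw [map_sub, sub_mul]

lemma umain (hR : IsDiffPolyRing δ i t coeff) (b : D) (n : ℕ) :
    (t - i b) ^ n = ∑ k ∈ Finset.range (n + 1),
      (n.choose k) • (i ((fun x => δ x - b * x)^[n - k] 1) * t ^ k) := by
  set T : D → D := fun x => δ x - b * x with hT
  induction n with
  | zero => simp
  | succ n ih =>
    set g : ℕ → R := fun k2 => i (T^[(n + 1) - k2] 1) * t ^ k2 with hg
    have hstep : (t - i b) ^ (n + 1) =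
        (∑ k ∈ Finset.range (n + 1), n.choose k • g (k + 1)) +
          ∑ k ∈ Finset.range (n + 1), n.choose k • g k := by
      rw [pow_succ', ih, Finset.mul_sum, ← Finset.sum_add_distrib]
      refine Finset.sum_congr rfl ?_
      intro k hk
      have hk' : k ≤ n := Nat.lt_succ_iff.mp (Finset.mem_range.mp hk)
      rw [mul_smul_comm, ustep hR b k, smul_add]
      congr 2
      · show i (T^[n - k] 1) * t ^ (k + 1) = i (T^[(n + 1) - (k + 1)] 1) * t ^ (k + 1)
        rw [Nat.succ_sub_succ]
      · show i (δ (T^[n - k] 1) - b * T^[n - k] 1) * t ^ k =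
            i (T^[(n + 1) - k] 1) * t ^ k
        have h1 : δ (T^[n - k] 1) - b * T^[n - k] 1 = T (T^[n - k] 1) := rfl
        have h2 : T (T^[n - k] 1) = T^[(n + 1) - k] 1 := by
          rw [← Function.iterate_succ_apply' T (n - k) 1]
          congr 1
          omega
        rw [h1, h2]
    have hpascal : ∑ k ∈ Finset.range (n + 2), (n + 1).choose k • g k =
        (∑ k ∈ Finset.range (n + 1), n.choose k • g (k + 1)) +
          ∑ k ∈ Finset.range (n + 1), n.choose k • g k := by
      rw [Finset.sum_range_succ' (fun k => (n + 1).choose k • g k) (n + 1)]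
      have h2 : ∑ k ∈ Finset.range (n + 1), (n + 1).choose (k + 1) • g (k + 1) =
          (∑ k ∈ Finset.range (n + 1), n.choose k • g (k + 1)) +
            ∑ k ∈ Finset.range (n + 1), n.choose (k + 1) • g (k + 1) := by
        rw [← Finset.sum_add_distrib]
        exact Finset.sum_congr rfl fun k _ => by rw [Nat.choose_succ_succ, add_nsmul]
      have h3 : (∑ k ∈ Finset.range (n + 1), n.choose (k + 1) • g (k + 1)) +
          (n + 1).choose 0 • g 0 = ∑ k ∈ Finset.range (n + 1), n.choose k • g k := by
        have h4 : (n + 1).choose 0 • g 0 = n.choose 0 • g 0 := by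
          rw [Nat.choose_zero_right, Nat.choose_zero_right]
        rw [h4, ← Finset.sum_range_succ' (fun k => n.choose k • g k) (n + 1),
          Finset.sum_range_succ, Nat.choose_succ_self, zero_nsmul, add_zero]
      rw [h2, add_assoc, h3]
    rw [hstep, ← hpascal]

lemma upow_p_pow (hR : IsDiffPolyRing δ i t coeff) (p : ℕ) (hp : p.Prime) [CharP D p]
    (b : D) (k : ℕ) :
    (t - i b) ^ p ^ k = t ^ p ^ k + i ((fun x => δ x - b * x)^[p ^ k] 1) := by
  have hN : 0 < p ^ k := Nat.pow_pos hp.pos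
  rw [umain hR b (p ^ k), Finset.sum_range_succ]
  have hlast : (p ^ k).choose (p ^ k) •
      (i ((fun x => δ x - b * x)^[p ^ k - p ^ k] 1) * t ^ p ^ k) = t ^ p ^ k := by
    simp
  have hrest : ∑ k2 ∈ Finset.range (p ^ k), (p ^ k).choose k2 •
      (i ((fun x => δ x - b * x)^[p ^ k - k2] 1) * t ^ k2) =
      i ((fun x => δ x - b * x)^[p ^ k] 1) := by
    rw [Finset.sum_eq_single_of_mem 0 (Finset.mem_range.mpr hN)]
    · simp
    · intro b2 hb2 hb20
      have hdvd : p ∣ (p ^ k).choose b2 :=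
        hp.dvd_choose_pow hb20 (Nat.ne_of_lt (Finset.mem_range.mp hb2))
      have hcast : (((p ^ k).choose b2 : ℕ) : D) = 0 :=
        (CharP.cast_eq_zero_iff D p _).mpr hdvd
      rw [nsmul_eq_mul, ← map_natCast i, hcast, map_zero, zero_mul]
  rw [hrest, hlast, add_comm]

end Aux3
section Aux4

variable {D R : Type*} [Ring D] [Ring R] {δ : D → D} {i : D →+* R} {t : R}
  {coeff : R ≃+ (ℕ →₀ D)}

lemma G_mono (hR : IsDiffPolyRing δ i t coeff) (b : D) (n : ℕ) (a : D) :
    Gmap coeff i t b (i a * t ^ n) = i a * (t - i b) ^ n := by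
  show substT coeff i (i a * t ^ n) (t - i b) = i a * (t - i b) ^ n
  unfold substT
  rw [coeff_mono hR, Finsupp.sum_single_index]
  rw [map_zero, zero_mul]

lemma G_add (b : D) (x y : R) :
    Gmap coeff i t b (x + y) = Gmap coeff i t b x + Gmap coeff i t b y := by
  unfold Gmap substT
  rw [map_add coeff x y]
  exact Finsupp.sum_add_index' (fun n => by rw [map_zero, zero_mul])
    (fun n c1 c2 => by rw [map_add, add_mul])

lemma G_zero (b : D) : Gmap coeff i t b (0 : R) = 0 := by
  show substT coeff i (0 : R) (t - i b) = 0
  unfold substT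
  rw [map_zero, Finsupp.sum_zero_index]

lemma G_one (hR : IsDiffPolyRing δ i t coeff) (b : D) : Gmap coeff i t b (1 : R) = 1 := by
  have h1 : (1 : R) = i 1 * t ^ 0 := by rw [map_one, pow_zero, mul_one]
  conv_lhs => rw [h1]
  rw [G_mono hR, map_one, pow_zero, mul_one]

lemma G_i_mul (hR : IsDiffPolyRing δ i t coeff) (b a : D) (x : R) :
    Gmap coeff i t b (i a * x) = i a * Gmap coeff i t b x := by
  induction x using rind hR with
  | h0 => rw [mul_zero, G_zero, mul_zero]
  | hadd x y hx hy => rw [mul_add, G_add, G_add, hx, hy, mul_add]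
  | hmono n c =>
    rw [← mul_assoc, ← map_mul, G_mono hR, G_mono hR, map_mul, mul_assoc]

lemma ucomm (hR : IsDiffPolyRing δ i t coeff) {b : D} (hb : b ∈ CenterSet D) (c : D) :
    (t - i b) * i c = i c * (t - i b) + i (δ c) := by
  rw [sub_mul, hR.1, mul_sub, ← map_mul, ← map_mul, hb c]
  abel

lemma G_t_mul (hR : IsDiffPolyRing δ i t coeff) {b : D} (hb : b ∈ CenterSet D) (x : R) :
    Gmap coeff i t b (t * x) = (t - i b) * Gmap coeff i t b x := by
  induction x using rind hR with
  | h0 => rw [mul_zero, G_zero, mul_zero]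
  | hadd x y hx hy => rw [mul_add, G_add, G_add, hx, hy, mul_add]
  | hmono n c =>
    rw [t_mul_mono hR, G_add, G_mono hR, G_mono hR, G_mono hR, ← mul_assoc,
      ucomm hR hb, add_mul, mul_assoc, ← pow_succ']

lemma G_tpow_mul (hR : IsDiffPolyRing δ i t coeff) {b : D} (hb : b ∈ CenterSet D)
    (n : ℕ) (x : R) :
    Gmap coeff i t b (t ^ n * x) = (t - i b) ^ n * Gmap coeff i t b x := by
  induction n with
  | zero => rw [pow_zero, one_mul, pow_zero, one_mul]
  | succ n ih =>
    rw [pow_succ', mul_assoc, G_t_mul hR hb, ih, pow_succ', mul_assoc]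

lemma G_mul (hR : IsDiffPolyRing δ i t coeff) {b : D} (hb : b ∈ CenterSet D) (x y : R) :
    Gmap coeff i t b (x * y) = Gmap coeff i t b x * Gmap coeff i t b y := by
  induction x using rind hR with
  | h0 => rw [zero_mul, G_zero, zero_mul]
  | hadd x x' hx hx' => rw [add_mul, G_add, G_add, hx, hx', add_mul]
  | hmono n c =>
    rw [mul_assoc, G_i_mul hR, G_tpow_mul hR hb, G_mono hR, mul_assoc]

lemma G_tpow (hR : IsDiffPolyRing δ i t coeff) (b : D) (n : ℕ) :
    Gmap coeff i t b (t ^ n) = (t - i b) ^ n := by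
  have h1 : (t ^ n : R) = i 1 * t ^ n := by rw [map_one, one_mul]
  rw [h1, G_mono hR, map_one, one_mul]

lemma G_inv (hR : IsDiffPolyRing δ i t coeff) {b : D} (hb : b ∈ CenterSet D) (x : R) :
    Gmap coeff i t b (Gmap coeff i t (-b) x) = x := by
  induction x using rind hR with
  | h0 => rw [G_zero, G_zero]
  | hadd x y hx hy => rw [G_add, G_add, hx, hy]
  | hmono n c =>
    have h1 : t - i (-b) = t + i b := by rw [map_neg, sub_neg_eq_add]
    rw [G_mono hR, h1, G_i_mul hR]
    congr 1
    induction n with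
    | zero => rw [pow_zero, pow_zero, G_one hR]
    | succ n ih =>
      rw [pow_succ', add_mul, G_add, G_i_mul hR, G_t_mul hR hb, ih, sub_mul, ← pow_succ']
      abel

end Aux4
section Aux5

variable {D R : Type*} [Ring D] [Ring R] {δ : D → D} {i : D →+* R} {t : R}
  {coeff : R ≃+ (ℕ →₀ D)}

lemma coeff_upow (hR : IsDiffPolyRing δ i t coeff) (b : D) (n k : ℕ) (hk : n < k) :
    coeff ((t - i b) ^ n) k = 0 := by
  rw [umain hR b n, map_sum, Finset.sum_apply']
  apply Finset.sum_eq_zero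
  intro j hj
  have hj' : j ≤ n := Nat.lt_succ_iff.mp (Finset.mem_range.mp hj)
  rw [map_nsmul, Finsupp.smul_apply, coeff_mono hR, Finsupp.single_apply,
    if_neg (by omega), smul_zero]

lemma coeff_iconst (hR : IsDiffPolyRing δ i t coeff) (c : D) :
    coeff (i c) = Finsupp.single 0 c := by
  rw [← coeff_mono hR 0 c, pow_zero, mul_one]

lemma G_degLt (hR : IsDiffPolyRing δ i t coeff) (b : D) (m : ℕ) (x : R)
    (hx : DegLt coeff m x) : DegLt coeff m (Gmap coeff i t b x) := by
  intro k hk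
  show coeff (substT coeff i x (t - i b)) k = 0
  unfold substT
  rw [map_finsuppSum, Finsupp.sum_apply]
  unfold Finsupp.sum
  apply Finset.sum_eq_zero
  intro n hn
  have hnm : n < m := by
    by_contra hc
    exact Finsupp.mem_support_iff.mp hn (hx n (by omega))
  dsimp only
  rw [coeff_i_mul hR, coeff_upow hR b n k (by omega), mul_zero]

lemma neg_center {b : D} (hb : b ∈ CenterSet D) : -b ∈ CenterSet D := by
  intro y
  rw [neg_mul, mul_neg, hb y]

end Aux5
section Aux6

variable {D R : Type*} [Ring D] [Ring R]

lemma master {δ : D → D} {i : D →+* R} {t : R} {coeff : R ≃+ (ℕ →₀ D)}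
    (p : ℕ) (hp : p.Prime) [CharP D p] (e : ℕ) (he : 1 ≤ e)
    (hδ : IsDeriv δ)
    (hR : IsDiffPolyRing δ i t coeff)
    (a : Fin e → D) (d : D) (f : R)
    (hfdef : f = t ^ p ^ e + (∑ j : Fin e, i (a j) * t ^ p ^ (e - 1 - (j : ℕ))) + i d)
    (mulS : R → R → R) (hmulS : IsPetitMul coeff f (p ^ e) mulS)
    (a' : D) (ha' : a' ∈ CenterSet D) (mulS' : R → R → R)
    (hmulS' : IsPetitMul coeff (f - i (Vf coeff i t f a')) (p ^ e) mulS') :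
    IsAlgIso (F0Set δ) i (SfSet coeff (p ^ e)) (SfSet coeff (p ^ e)) mulS mulS'
      (Gmap coeff i t a') := by
  set T : D → D := fun x => δ x - a' * x with hT
  set W : D := T^[p ^ e] 1 + ∑ j : Fin e, a j * T^[p ^ (e - 1 - (j : ℕ))] 1 with hW
  set G : R → R := Gmap coeff i t a' with hG
  -- G f = f + i W
  have hGf0 : G (f) = f + i W := by
    have hmonoG : ∀ (k : ℕ) (c : D),
        G (i c * t ^ p ^ k) = i c * t ^ p ^ k + i (c * T^[p ^ k] 1) := by
      intro k c
      rw [hG, G_mono hR, upow_p_pow hR p hp a' k, mul_add, ← map_mul]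
    have h2 : G (t ^ p ^ e) = t ^ p ^ e + i (T^[p ^ e] 1) := by
      rw [hG, G_tpow hR, upow_p_pow hR p hp a' e]
    have h3 : G (i d) = i d := by
      have hd : (i d : R) = i d * t ^ 0 := by rw [pow_zero, mul_one]
      rw [hG]
      conv_lhs => rw [hd]
      rw [G_mono hR, pow_zero, mul_one]
    have h4 : G (∑ j : Fin e, i (a j) * t ^ p ^ (e - 1 - (j : ℕ))) =
        (∑ j : Fin e, i (a j) * t ^ p ^ (e - 1 - (j : ℕ))) +
          i (∑ j : Fin e, a j * T^[p ^ (e - 1 - (j : ℕ))] 1) := by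
      have hGh : G (∑ j : Fin e, i (a j) * t ^ p ^ (e - 1 - (j : ℕ))) =
          ∑ j : Fin e, G (i (a j) * t ^ p ^ (e - 1 - (j : ℕ))) := by
        rw [hG]
        exact map_sum (AddMonoidHom.mk' (Gmap coeff i t a') (G_add a')) _ Finset.univ
      rw [hGh, map_sum i, ← Finset.sum_add_distrib]
      exact Finset.sum_congr rfl fun j _ => hmonoG _ _
    calc G f = G (t ^ p ^ e) + G (∑ j : Fin e, i (a j) * t ^ p ^ (e - 1 - (j : ℕ)))
          + G (i d) := by rw [hfdef, hG, G_add, G_add]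
      _ = f + i W := by
          rw [h2, h3, h4, hfdef, hW, map_add i]
          abel
  have hVf : Vf coeff i t f a' = -W := by
    show coeff (f - substT coeff i f (t - i a')) 0 = -W
    have hsub : substT coeff i f (t - i a') = G f := rfl
    have hfw : f - (f + i W) = i (-W) := by rw [map_neg]; abel
    rw [hsub, hGf0, hfw, coeff_iconst hR, Finsupp.single_eq_same]
  have hGf : G f = f - i (Vf coeff i t f a') := by
    rw [hVf, map_neg, sub_neg_eq_add, hGf0]
  -- monicity of h = f - i (Vf ...)
  have hpe : 0 < p ^ e := Nat.pow_pos hp.pos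
  have hcf : ∀ k, p ^ e ≤ k → coeff f k = if p ^ e = k then 1 else 0 := by
    intro k hk
    rw [hfdef, map_add coeff _ (i d), map_add coeff (t ^ p ^ e) _, Finsupp.add_apply,
      Finsupp.add_apply, coeff_tpow hR, map_sum coeff _ Finset.univ, Finset.sum_apply',
      coeff_iconst hR]
    have hsum0 : (∑ j : Fin e, (coeff (i (a j) * t ^ p ^ (e - 1 - (j : ℕ)))) k) = 0 := by
      refine Finset.sum_eq_zero fun j _ => ?_
      rw [coeff_mono hR, Finsupp.single_apply, if_neg ?_]
      have : p ^ ((e : ℕ) - 1 - (j : ℕ)) < p ^ e :=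
        Nat.pow_lt_pow_right hp.one_lt (by omega)
      omega
    rw [hsum0, Finsupp.single_apply, Finsupp.single_apply,
      if_neg (show ¬(0 : ℕ) = k by omega), add_zero, add_zero]
  have hm1 : coeff (f - i (Vf coeff i t f a')) (p ^ e) = 1 := by
    rw [map_sub, Finsupp.sub_apply, hcf (p ^ e) le_rfl, if_pos rfl, coeff_iconst hR,
      Finsupp.single_apply, if_neg (by omega), sub_zero]
  have hm2 : ∀ k, p ^ e < k → coeff (f - i (Vf coeff i t f a')) k = 0 := by
    intro k hk
    rw [map_sub, Finsupp.sub_apply, hcf k (by omega), if_neg (by omega), coeff_iconst hR,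
      Finsupp.single_apply, if_neg (by omega), sub_zero]
  -- the inverse map
  have hinv1 : ∀ x, G (Gmap coeff i t (-a') x) = x := fun x => G_inv hR ha' x
  have hinv2 : ∀ x, Gmap coeff i t (-a') (G x) = x := by
    intro x
    have := G_inv hR (neg_center ha') (x := x)
    rwa [neg_neg] at this
  refine ⟨⟨?_, ?_, ?_⟩, ?_, ?_, ?_, ?_⟩
  · -- MapsTo
    intro x hx
    exact G_degLt hR a' (p ^ e) x hx
  · -- InjOn
    intro x _ y _ hxy
    rw [← hinv2 x, ← hinv2 y, hxy]
  · -- SurjOn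
    intro y hy
    exact ⟨Gmap coeff i t (-a') y, G_degLt hR (-a') (p ^ e) y hy, hinv1 y⟩
  · -- additive
    intro x _ y _
    exact G_add a' x y
  · -- multiplicative
    intro x hx y hy
    obtain ⟨hdeg1, q, hq⟩ := hmulS x y
    obtain ⟨hdeg2, q2, hq2⟩ := hmulS' (G x) (G y)
    have h3 : G q * (f - i (Vf coeff i t f a')) + G (mulS x y) = G x * G y := by
      rw [← hGf, ← G_mul hR ha', ← G_mul hR ha', ← G_add a', ← hq]
    rw [hq2] at h3
    exact remainder_unique hR hδ hm1 hm2 (G q) q2 (G (mulS x y)) (mulS' (G x) (G y))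
      (G_degLt hR a' (p ^ e) _ hdeg1) hdeg2 h3
  · exact G_one hR a'
  · intro c _ x _
    exact G_i_mul hR a' c x

end Aux6
/-- for a monic `p`-polynomial
`f(t) = t^{p^e} + a₁t^{p^{e−1}} + ⋯ + a_e t + d ∈ D[t;δ]` of degree `p^e ≥ 2`:
(i) `S_f ≅ S_h` as `F`-algebras for `h(t) = f(t) − V_f(a)`, for every `a ∈ C`;
(ii) for every `a ∈ C` with `V_f(a) = 0`, the map `G_{id,−a}` is an `F`-algebra
automorphism of `S_f`. -/
theorem stmt_5 {D R : Type*} [DivisionRing D] [Ring R]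
    (p : ℕ) (hp : p.Prime) [CharP D p] (e : ℕ) (he : 1 ≤ e)
    (n e0 : ℕ) (hn : HasDimIn (CenterSet D) Set.univ (n ^ 2))
    (δ : D → D) (hδ : IsDeriv δ) (hδ0 : δ ≠ 0)
    (c0 : Fin e0 → D) (hmin : IsMinPPoly δ (CenterSet D) (F0Set δ) p e0 c0)
    (i : D →+* R) (t : R) (coeff : R ≃+ (ℕ →₀ D))
    (hR : IsDiffPolyRing δ i t coeff)
    (a : Fin e → D) (d : D) (f : R)
    (hfdef : f = t ^ p ^ e + (∑ j : Fin e, i (a j) * t ^ p ^ (e - 1 - (j : ℕ))) + i d)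
    (mulS : R → R → R) (hmulS : IsPetitMul coeff f (p ^ e) mulS) :
    -- (i)
    (∀ a' ∈ CenterSet D, ∀ mulS' : R → R → R,
      IsPetitMul coeff (f - i (Vf coeff i t f a')) (p ^ e) mulS' →
      ∃ H : R → R,
        IsAlgIso (F0Set δ) i (SfSet coeff (p ^ e)) (SfSet coeff (p ^ e)) mulS mulS' H) ∧
    -- (ii)
    ∀ a' ∈ CenterSet D, Vf coeff i t f a' = 0 →
      IsAut (F0Set δ) i (SfSet coeff (p ^ e)) mulS (Gmap coeff i t a') := by
  constructor
  · intro a' ha' mulS' hmulS'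
    exact ⟨Gmap coeff i t a',
      master p hp e he hδ hR a d f hfdef mulS hmulS a' ha' mulS' hmulS'⟩
  · intro a' ha' hV
    have hps : IsPetitMul coeff (f - i (Vf coeff i t f a')) (p ^ e) mulS := by
      rw [hV, map_zero, sub_zero]
      exact hmulS
    exact master p hp e he hδ hR a d f hfdef mulS hmulS a' ha' mulS hps
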